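/- Let x = (x_∞, x₂, x₃) ∈ F and let d ∈ {0,1} satisfy x₂ − d ∈ 2ℤ₂. Then the point u = ({(3/2)(x_∞ + d)}, (3/2)(x₂ + d) − ⌊(3/2)(x_∞ + d)⌋, (3/2)(x₃ + d) − ⌊(3/2)(x_∞ + d)⌋) lies in F and (3/2)·x − u ∈ Γ; that is, u is the unique representative in F of (3/2)x modulo Γ (the explicit formula for α^{(−1,1)}, multiplication by 3/2, on X = G/Γ ≅ F). -/

import Mathlib

open Set

noncomputable section

/-- The ambient group `G = ℝ × ℚ₂ × ℚ₃`. -/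
abbrev G : Type := ℝ × ℚ_[2] × ℚ_[3]

/-- The diagonal embedding of `ℚ` into `G`. -/
def Δ (r : ℚ) : G := ((r : ℝ), (r : ℚ_[2]), (r : ℚ_[3]))

/-- `ℤ[1/6]`, the rationals expressible with denominator `6^k`. -/
def zInv6 : Set ℚ := {q | ∃ (z : ℤ) (k : ℕ), q = z / 6 ^ k}

/-- `Γ = Δ(ℤ[1/6])`. -/
def Γ : Set G := Δ '' zInv6

/-- The fundamental domain `F = [0,1) × ℤ₂ × ℤ₃`. -/
def F : Set G := {x | x.1 ∈ Set.Ico (0 : ℝ) 1 ∧ ‖x.2.1‖ ≤ 1 ∧ ‖x.2.2‖ ≤ 1}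

/-- Coordinatewise multiplication by a rational on `G`. -/
def act (q : ℚ) (x : G) : G :=
  ((q : ℝ) * x.1, (q : ℚ_[2]) * x.2.1, (q : ℚ_[3]) * x.2.2)

-- helper lemmas
lemma norm_three_q2 : ‖(3 : ℚ_[2])‖ = 1 := by
  have h := Padic.norm_int_le_one (p := 2) 3
  have h2 := Padic.norm_intCast_lt_one_iff (p := 2) (k := 3)
  push_cast at h h2
  rcases lt_or_eq_of_le h with h' | h'
  · exact absurd (h2.mp h') (by decide)
  · exact h'

lemma norm_two_q3 : ‖(2 : ℚ_[3])‖ = 1 := by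
  have h := Padic.norm_int_le_one (p := 3) 2
  have h2 := Padic.norm_intCast_lt_one_iff (p := 3) (k := 2)
  push_cast at h h2
  rcases lt_or_eq_of_le h with h' | h'
  · exact absurd (h2.mp h') (by decide)
  · exact h'

lemma norm_p_q2 : ‖(2 : ℚ_[2])‖ = (2:ℝ)⁻¹ := by
  have h : ((2:ℕ) : ℚ_[2]) = 2 := by norm_num
  rw [← h, Padic.norm_p]; norm_num

lemma norm_p_q3 : ‖(3 : ℚ_[3])‖ = (3:ℝ)⁻¹ := by
  have h : ((3:ℕ) : ℚ_[3]) = 3 := by norm_num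
  rw [← h, Padic.norm_p]; norm_num

lemma norm_six_q2 : ‖(6 : ℚ_[2])‖ = (2 : ℝ)⁻¹ := by
  have : (6 : ℚ_[2]) = 2 * 3 := by norm_num
  rw [this, norm_mul, norm_three_q2, norm_p_q2, mul_one]

lemma norm_six_q3 : ‖(6 : ℚ_[3])‖ = (3 : ℝ)⁻¹ := by
  have : (6 : ℚ_[3]) = 3 * 2 := by norm_num
  rw [this, norm_mul, norm_two_q3, norm_p_q3, mul_one]

lemma key (q : ℚ) (hq : q ∈ zInv6) (h2 : ‖(q : ℚ_[2])‖ ≤ 1)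
    (h3 : ‖(q : ℚ_[3])‖ ≤ 1) (hr : |(q : ℝ)| < 1) : q = 0 := by
  obtain ⟨z, k, rfl⟩ := hq
  have hz2 : ((2 : ℤ) ^ k) ∣ z := by
    have hb : ‖(z : ℚ_[2])‖ ≤ ((2:ℕ):ℝ) ^ (-(k:ℤ)) := by
      have e : ((z : ℚ_[2])) = ((z / 6 ^ k : ℚ) : ℚ_[2]) * 6 ^ k := by
        push_cast; field_simp
      rw [e, norm_mul, norm_pow, norm_six_q2]
      calc ‖((z / 6 ^ k : ℚ) : ℚ_[2])‖ * ((2:ℝ)⁻¹) ^ k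
          ≤ 1 * ((2:ℝ)⁻¹) ^ k := mul_le_mul_of_nonneg_right h2 (by positivity)
        _ = ((2:ℕ):ℝ) ^ (-(k:ℤ)) := by
            rw [one_mul, zpow_neg, ← inv_zpow, zpow_natCast]; norm_num
    have := (Padic.norm_int_le_pow_iff_dvd (p := 2) z k).mp hb
    exact_mod_cast this
  have hz3 : ((3 : ℤ) ^ k) ∣ z := by
    have hb : ‖(z : ℚ_[3])‖ ≤ ((3:ℕ):ℝ) ^ (-(k:ℤ)) := by
      have e : ((z : ℚ_[3])) = ((z / 6 ^ k : ℚ) : ℚ_[3]) * 6 ^ k := by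
        push_cast; field_simp
      rw [e, norm_mul, norm_pow, norm_six_q3]
      calc ‖((z / 6 ^ k : ℚ) : ℚ_[3])‖ * ((3:ℝ)⁻¹) ^ k
          ≤ 1 * ((3:ℝ)⁻¹) ^ k := mul_le_mul_of_nonneg_right h3 (by positivity)
        _ = ((3:ℕ):ℝ) ^ (-(k:ℤ)) := by
            rw [one_mul, zpow_neg, ← inv_zpow, zpow_natCast]; norm_num
    have := (Padic.norm_int_le_pow_iff_dvd (p := 3) z k).mp hb
    exact_mod_cast this
  have hcop : IsCoprime ((2:ℤ)^k) ((3:ℤ)^k) :=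
    (Int.isCoprime_iff_gcd_eq_one.mpr (by decide)).pow
  have h6 : ((6 : ℤ) ^ k) ∣ z := by
    have := hcop.mul_dvd hz2 hz3
    rwa [← mul_pow] at this
  obtain ⟨m, rfl⟩ := h6
  have hq : ((6 ^ k * m : ℤ) : ℚ) / 6 ^ k = (m : ℚ) := by
    push_cast; field_simp
  rw [hq] at hr ⊢
  have hm : m = 0 := by
    by_contra h
    have h1 : (1:ℝ) ≤ |(m:ℝ)| := by exact_mod_cast Int.one_le_abs h
    push_cast at hr
    linarith
  simp [hm]

lemma zInv6_sub {a b : ℚ} (ha : a ∈ zInv6) (hb : b ∈ zInv6) : a - b ∈ zInv6 := by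
  obtain ⟨z1, k1, rfl⟩ := ha
  obtain ⟨z2, k2, rfl⟩ := hb
  exact ⟨z1 * 6 ^ k2 - z2 * 6 ^ k1, k1 + k2, by push_cast; field_simp; ring⟩

/-- The explicit formula for `α^{(-1,1)}` (multiplication by `3/2`) on `X = G/Γ ≅ F`:
if `d ∈ {0,1}` satisfies `x₂ - d ∈ 2ℤ₂`, then
`u = ({(3/2)(x_∞+d)}, (3/2)(x₂+d) - ⌊(3/2)(x_∞+d)⌋, (3/2)(x₃+d) - ⌊(3/2)(x_∞+d)⌋)`
lies in `F` and is the unique representative of `(3/2)x` modulo `Γ`. -/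
theorem times_three_halves_formula (x : G) (hx : x ∈ F) (d : ℤ) (hd : d = 0 ∨ d = 1)
    (hdig : ∃ z : ℚ_[2], ‖z‖ ≤ 1 ∧ x.2.1 - (d : ℚ_[2]) = 2 * z) :
    ∀ u : G,
      u = (Int.fract ((3 / 2) * (x.1 + (d : ℝ))),
           (3 / 2 : ℚ_[2]) * (x.2.1 + (d : ℚ_[2]))
             - ((⌊(3 / 2) * (x.1 + (d : ℝ))⌋ : ℤ) : ℚ_[2]),
           (3 / 2 : ℚ_[3]) * (x.2.2 + (d : ℚ_[3]))
             - ((⌊(3 / 2) * (x.1 + (d : ℝ))⌋ : ℤ) : ℚ_[3])) →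
      u ∈ F ∧ act (3/2) x - u ∈ Γ ∧ ∀ v ∈ F, act (3/2) x - v ∈ Γ → v = u := by
  rintro u rfl
  obtain ⟨⟨hx1, hx1'⟩, hx2, hx3⟩ := hx
  obtain ⟨z, hz, hzx⟩ := hdig
  set n : ℤ := ⌊(3 / 2) * (x.1 + (d : ℝ))⌋ with hn
  have hx2d : x.2.1 = 2 * z + (d : ℚ_[2]) := by linear_combination hzx
  -- u ∈ F
  have huF : (Int.fract ((3 / 2) * (x.1 + (d : ℝ))),
      (3 / 2 : ℚ_[2]) * (x.2.1 + (d : ℚ_[2])) - ((n : ℤ) : ℚ_[2]),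
      (3 / 2 : ℚ_[3]) * (x.2.2 + (d : ℚ_[3])) - ((n : ℤ) : ℚ_[3])) ∈ F := by
    refine ⟨⟨Int.fract_nonneg _, Int.fract_lt_one _⟩, ?_, ?_⟩
    · have e : (3 / 2 : ℚ_[2]) * (x.2.1 + (d : ℚ_[2])) - (n : ℚ_[2])
          = 3 * z + ((3 * d - n : ℤ) : ℚ_[2]) := by
        rw [hx2d]
        push_cast
        ring
      rw [e]
      refine le_trans (Padic.nonarchimedean _ _) (max_le ?_ (Padic.norm_int_le_one _))
      calc ‖(3 : ℚ_[2]) * z‖ = ‖(3:ℚ_[2])‖ * ‖z‖ := norm_mul _ _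
        _ ≤ 1 * 1 := by rw [norm_three_q2]; simpa using hz
        _ = 1 := by norm_num
    · have e : (3 / 2 : ℚ_[3]) * (x.2.2 + (d : ℚ_[3])) - (n : ℚ_[3])
          = (3 / 2 : ℚ_[3]) * (x.2.2 + (d : ℚ_[3])) + ((-n : ℤ) : ℚ_[3]) := by
        push_cast; ring
      rw [e]
      refine le_trans (Padic.nonarchimedean _ _) (max_le ?_ (Padic.norm_int_le_one _))
      have h32 : ‖(3 / 2 : ℚ_[3])‖ ≤ 1 := by
        rw [norm_div, norm_two_q3, norm_p_q3]
        norm_num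
      calc ‖(3 / 2 : ℚ_[3]) * (x.2.2 + (d : ℚ_[3]))‖
          = ‖(3/2 : ℚ_[3])‖ * ‖x.2.2 + (d : ℚ_[3])‖ := norm_mul _ _
        _ ≤ 1 * 1 := by
            apply mul_le_mul h32 ?_ (norm_nonneg _) zero_le_one
            exact le_trans (Padic.nonarchimedean _ _)
              (max_le hx3 (Padic.norm_int_le_one _))
        _ = 1 := by norm_num
  have hΓu : act (3/2) x - (Int.fract ((3 / 2) * (x.1 + (d : ℝ))),
      (3 / 2 : ℚ_[2]) * (x.2.1 + (d : ℚ_[2])) - ((n : ℤ) : ℚ_[2]),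
      (3 / 2 : ℚ_[3]) * (x.2.2 + (d : ℚ_[3])) - ((n : ℤ) : ℚ_[3])) ∈ Γ := by
    refine ⟨(n : ℚ) - 3/2 * d, ⟨3 * (2 * n - 3 * d), 1, by push_cast; ring⟩, ?_⟩
    unfold act Δ
    have hfr : Int.fract ((3 / 2) * (x.1 + (d : ℝ)))
        = (3 / 2) * (x.1 + (d : ℝ)) - n := rfl
    refine Prod.ext ?_ (Prod.ext ?_ ?_)
    · show ((n : ℚ) - 3/2 * d : ℚ) = ((3/2 : ℚ) : ℝ) * x.1 - Int.fract _
      rw [hfr]; push_cast; ring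
    · show (((n : ℚ) - 3/2 * d : ℚ) : ℚ_[2]) = ((3/2 : ℚ) : ℚ_[2]) * x.2.1 - _
      push_cast; ring
    · show (((n : ℚ) - 3/2 * d : ℚ) : ℚ_[3]) = ((3/2 : ℚ) : ℚ_[3]) * x.2.2 - _
      push_cast; ring
  set u : G := (Int.fract ((3 / 2) * (x.1 + (d : ℝ))),
      (3 / 2 : ℚ_[2]) * (x.2.1 + (d : ℚ_[2])) - ((n : ℤ) : ℚ_[2]),
      (3 / 2 : ℚ_[3]) * (x.2.2 + (d : ℚ_[3])) - ((n : ℤ) : ℚ_[3])) with hu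
  refine ⟨huF, hΓu, ?_⟩
  rintro v hvF hvΓ
  obtain ⟨q2, hq2, e2⟩ := hvΓ
  obtain ⟨q1, hq1, e1⟩ := hΓu
  have E : Δ (q1 - q2) = v - u := by
    have h12 : Δ q1 - Δ q2 = v - u := by rw [e1, e2]; abel
    rw [← h12]
    unfold Δ
    rw [Prod.mk_sub_mk, Prod.mk_sub_mk]
    push_cast
    rfl
  have hq : q1 - q2 ∈ zInv6 := zInv6_sub hq1 hq2
  have E1 : ((q1 - q2 : ℚ) : ℝ) = v.1 - u.1 := by
    have h := congrArg Prod.fst E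
    simpa [Δ] using h
  have E2 : ((q1 - q2 : ℚ) : ℚ_[2]) = v.2.1 - u.2.1 := by
    have h := congrArg (fun w : G => w.2.1) E
    simpa [Δ] using h
  have E3 : ((q1 - q2 : ℚ) : ℚ_[3]) = v.2.2 - u.2.2 := by
    have h := congrArg (fun w : G => w.2.2) E
    simpa [Δ] using h
  have h0 : q1 - q2 = 0 := by
    apply key _ hq
    · rw [E2, sub_eq_add_neg]
      exact le_trans (Padic.nonarchimedean _ _)
        (max_le hvF.2.1 (by rw [norm_neg]; exact huF.2.1))
    · rw [E3, sub_eq_add_neg]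
      exact le_trans (Padic.nonarchimedean _ _)
        (max_le hvF.2.2 (by rw [norm_neg]; exact huF.2.2))
    · rw [E1, abs_lt]
      exact ⟨by linarith [hvF.1.1, huF.1.2], by linarith [hvF.1.2, huF.1.1]⟩
  have hvu : v - u = 0 := by rw [← E, h0]; simp [Δ]
  exact sub_eq_zero.mp hvu
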